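/- If G is a d-regular graph (d ≥ 1), then G admits an edge coloring with colors {1,2} such that adjacent vertices have distinct weighted degrees (sums of incident colors) if and only if the edge set of G can be partitioned into two sets each inducing a locally irregular subgraph (a graph in which adjacent vertices have distinct degrees). -/

import Mathlib

/-- A graph is locally irregular if adjacent vertices have distinct degrees. -/
def LocallyIrregular {V : Type*} (H : SimpleGraph V) : Prop :=
  ∀ u v : V, H.Adj u v → (H.neighborSet u).ncard ≠ (H.neighborSet v).ncard

lemma aux_sum {V : Type*} [Fintype V] (G : SimpleGraph V) [DecidableRel G.Adj]
    (H : SimpleGraph V) (hle : ∀ u v : V, H.Adj u v → G.Adj u v) (c : Sym2 V → ℕ)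
    (hc : ∀ u v : V, G.Adj u v →
      (H.Adj u v ∧ c s(u, v) = 2) ∨ (¬ H.Adj u v ∧ c s(u, v) = 1)) (u : V) :
    ∑ w ∈ G.neighborFinset u, c s(u, w) =
      (G.neighborFinset u).card + (H.neighborSet u).ncard := by
  classical
  have h1 : ∀ w ∈ G.neighborFinset u,
      c s(u, w) = 1 + (if w ∈ H.neighborSet u then 1 else 0) := by
    intro w hw
    rw [SimpleGraph.mem_neighborFinset] at hw
    rcases hc u w hw with ⟨h, h2⟩ | ⟨h, h2⟩ <;>
      simp [SimpleGraph.mem_neighborSet, h, h2]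
  rw [Finset.sum_congr rfl h1, Finset.sum_add_distrib, Finset.sum_const, smul_eq_mul, mul_one]
  congr 1
  have hb : ∑ w ∈ G.neighborFinset u, (if w ∈ H.neighborSet u then (1:ℕ) else 0) =
      ((G.neighborFinset u).filter (· ∈ H.neighborSet u)).card := by
    simp [Finset.sum_boole]
  rw [hb]
  have hf : (G.neighborFinset u).filter (· ∈ H.neighborSet u) = (H.neighborSet u).toFinset := by
    ext w
    simp only [Finset.mem_filter, SimpleGraph.mem_neighborFinset, Set.mem_toFinset,
      SimpleGraph.mem_neighborSet]
    exact ⟨fun h => h.2, fun h => ⟨hle u w h, h⟩⟩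
  rw [hf, Set.ncard_eq_toFinset_card']

lemma aux_card_add {V : Type*} [Fintype V] (G H₁ H₂ : SimpleGraph V)
    (hunion : H₁.edgeSet ∪ H₂.edgeSet = G.edgeSet)
    (hdisj : Disjoint H₁.edgeSet H₂.edgeSet) (u : V) :
    (H₁.neighborSet u).ncard + (H₂.neighborSet u).ncard = (G.neighborSet u).ncard := by
  classical
  have hu : H₁.neighborSet u ∪ H₂.neighborSet u = G.neighborSet u := by
    ext w
    have h : s(u, w) ∈ H₁.edgeSet ∪ H₂.edgeSet ↔ s(u, w) ∈ G.edgeSet := by rw [hunion]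
    simpa [Set.mem_union, SimpleGraph.mem_neighborSet, SimpleGraph.mem_edgeSet] using h
  have hdj : Disjoint (H₁.neighborSet u) (H₂.neighborSet u) := by
    rw [Set.disjoint_left]
    intro w h1 h2
    exact Set.disjoint_left.mp hdisj ((H₁.mem_edgeSet).mpr h1) ((H₂.mem_edgeSet).mpr h2)
  rw [← hu, Set.ncard_union_eq hdj (Set.toFinite _) (Set.toFinite _)]

theorem stmt_0 {V : Type*} [Fintype V] (G : SimpleGraph V) [DecidableRel G.Adj]
    (d : ℕ) (hd : 1 ≤ d) (hreg : G.IsRegularOfDegree d) :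
    (∃ c : Sym2 V → ℕ, (∀ e ∈ G.edgeSet, c e = 1 ∨ c e = 2) ∧
      ∀ u v : V, G.Adj u v →
        (∑ w ∈ G.neighborFinset u, c s(u, w)) ≠ (∑ w ∈ G.neighborFinset v, c s(v, w))) ↔
    (∃ H₁ H₂ : SimpleGraph V, H₁.edgeSet ∪ H₂.edgeSet = G.edgeSet ∧
      Disjoint H₁.edgeSet H₂.edgeSet ∧ LocallyIrregular H₁ ∧ LocallyIrregular H₂) := by
  classical
  have hdG : ∀ u : V, (G.neighborSet u).ncard = d := by
    intro u
    rw [← Nat.card_coe_set_eq, Nat.card_eq_fintype_card,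
      SimpleGraph.card_neighborSet_eq_degree]
    exact hreg u
  constructor
  · rintro ⟨c, hc12, hne⟩
    set H₁ : SimpleGraph V :=
      { Adj := fun u v => G.Adj u v ∧ c s(u, v) = 1
        symm := ⟨by intro u v ⟨h, hc⟩; exact ⟨h.symm, by rwa [Sym2.eq_swap]⟩⟩
        loopless := ⟨by intro u ⟨h, _⟩; exact G.loopless.irrefl u h⟩ } with hH₁
    set H₂ : SimpleGraph V :=
      { Adj := fun u v => G.Adj u v ∧ c s(u, v) = 2
        symm := ⟨by intro u v ⟨h, hc⟩; exact ⟨h.symm, by rwa [Sym2.eq_swap]⟩⟩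
        loopless := ⟨by intro u ⟨h, _⟩; exact G.loopless.irrefl u h⟩ } with hH₂
    have hunion : H₁.edgeSet ∪ H₂.edgeSet = G.edgeSet := by
      ext e
      induction e using Sym2.ind with
      | _ u v =>
        simp only [Set.mem_union, SimpleGraph.mem_edgeSet, hH₁, hH₂]
        constructor
        · rintro (⟨h, _⟩ | ⟨h, _⟩) <;> exact h
        · intro h
          rcases hc12 s(u, v) ((G.mem_edgeSet).mpr h) with h1 | h2
          · exact Or.inl ⟨h, h1⟩
          · exact Or.inr ⟨h, h2⟩
    have hdisj : Disjoint H₁.edgeSet H₂.edgeSet := by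
      rw [Set.disjoint_left]
      intro e h1 h2
      induction e using Sym2.ind with
      | _ u v =>
        rw [SimpleGraph.mem_edgeSet] at h1 h2
        have ha := h1.2
        have hb := h2.2
        omega
    have hc2 : ∀ u v : V, G.Adj u v →
        (H₂.Adj u v ∧ c s(u, v) = 2) ∨ (¬ H₂.Adj u v ∧ c s(u, v) = 1) := by
      intro u v h
      rcases hc12 s(u, v) ((G.mem_edgeSet).mpr h) with h1 | h2
      · refine Or.inr ⟨fun hh => ?_, h1⟩
        have := hh.2; omega
      · exact Or.inl ⟨⟨h, h2⟩, h2⟩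
    have hsum : ∀ u : V, (∑ w ∈ G.neighborFinset u, c s(u, w))
        = d + (H₂.neighborSet u).ncard := by
      intro u
      have hcard : (G.neighborFinset u).card = d := hreg u
      rw [aux_sum G H₂ (fun u v h => h.1) c hc2 u, hcard]
    have hne2 : ∀ u v : V, G.Adj u v →
        (H₂.neighborSet u).ncard ≠ (H₂.neighborSet v).ncard := by
      intro u v h hcontra
      exact hne u v h (by rw [hsum u, hsum v, hcontra])
    refine ⟨H₁, H₂, hunion, hdisj, ?_, ?_⟩
    · intro u v h
      have hG : G.Adj u v := h.1
      have h2 := hne2 u v hG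
      have hu := aux_card_add G H₁ H₂ hunion hdisj u
      have hv := aux_card_add G H₁ H₂ hunion hdisj v
      rw [hdG u] at hu; rw [hdG v] at hv
      omega
    · intro u v h
      exact hne2 u v h.1
  · rintro ⟨H₁, H₂, hunion, hdisj, hir1, hir2⟩
    have hle2 : ∀ u v : V, H₂.Adj u v → G.Adj u v := by
      intro u v h
      have : s(u, v) ∈ G.edgeSet := by
        rw [← hunion]; exact Or.inr ((H₂.mem_edgeSet).mpr h)
      exact (G.mem_edgeSet).mp this
    refine ⟨fun e => if e ∈ H₂.edgeSet then 2 else 1, ?_, ?_⟩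
    · intro e _
      by_cases h : e ∈ H₂.edgeSet <;> simp [h]
    · intro u v hadj
      have hc2 : ∀ u v : V, G.Adj u v →
          (H₂.Adj u v ∧ (if s(u, v) ∈ H₂.edgeSet then (2:ℕ) else 1) = 2) ∨
          (¬ H₂.Adj u v ∧ (if s(u, v) ∈ H₂.edgeSet then (2:ℕ) else 1) = 1) := by
        intro u v h
        by_cases hh : H₂.Adj u v
        · exact Or.inl ⟨hh, by simp [(H₂.mem_edgeSet).mpr hh]⟩
        · refine Or.inr ⟨hh, ?_⟩
          rw [if_neg (fun hm => hh ((H₂.mem_edgeSet).mp hm))]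
      have hsum : ∀ x : V,
          (∑ w ∈ G.neighborFinset x, (if s(x, w) ∈ H₂.edgeSet then (2:ℕ) else 1))
          = d + (H₂.neighborSet x).ncard := by
        intro x
        have h := aux_sum G H₂ hle2 (fun e => if e ∈ H₂.edgeSet then (2:ℕ) else 1) hc2 x
        have hcard : (G.neighborFinset x).card = d := hreg x
        rw [hcard] at h
        simpa using h
      rw [hsum u, hsum v]
      have hne2 : (H₂.neighborSet u).ncard ≠ (H₂.neighborSet v).ncard := by
        have he : s(u, v) ∈ H₁.edgeSet ∪ H₂.edgeSet := by
          rw [hunion]; exact (G.mem_edgeSet).mpr hadj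
        rcases he with h1 | h2
        · have h1' := hir1 u v ((H₁.mem_edgeSet).mp h1)
          have hu := aux_card_add G H₁ H₂ hunion hdisj u
          have hv := aux_card_add G H₁ H₂ hunion hdisj v
          rw [hdG u] at hu; rw [hdG v] at hv
          omega
        · exact hir2 u v ((H₂.mem_edgeSet).mp h2)
      omega
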